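/- For the polynomial F₀(φ) = φ^M P₂(φ) - P₁(φ), the point φ = 1 is a root of multiplicity at least 2: F₀(1) = 0 and F₀'(1) = 0, using P₁(1) = P₂(1) = K³, P₁'(1) = MK³ + K²(3+4K), and P₂'(1) = K²(3+4K). Moreover F₀''(1) = M(M+1)K³ + 2A²(KM - 1), which is nonzero when KM ≥ 1, so φ = 1 is exactly a double root in that case. -/
import Mathlib

open Polynomial

theorem F0_double_root_at_one (K A : ℝ) (hK : 0 < K) (hA : A = 1 + K)
    (M : ℕ) (hM : 3 ≤ M)
    (P₁ P₂ F₀ : ℝ → ℝ)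
    (hP₁ : ∀ φ : ℝ, P₁ φ = K * ((A * φ - 1) ^ 2 * φ ^ 2 - (φ - 1) ^ 2)
        + (K * M + 1) * (φ - 1) * (A * φ - 1) * (A * φ ^ 2 - 1))
    (hP₂ : ∀ φ : ℝ, P₂ φ = φ * (A * φ - 1) ^ 3 - A ^ 2 * (φ - 1) ^ 2
        + M * (A * φ - 1) * A ^ 2 * (φ - 1) ^ 2)
    (hF₀ : ∀ φ : ℝ, F₀ φ = φ ^ M * P₂ φ - P₁ φ) :
    P₁ 1 = K ^ 3 ∧ P₂ 1 = K ^ 3 ∧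
    deriv P₁ 1 = M * K ^ 3 + K ^ 2 * (3 + 4 * K) ∧
    deriv P₂ 1 = K ^ 2 * (3 + 4 * K) ∧
    F₀ 1 = 0 ∧ deriv F₀ 1 = 0 ∧
    iteratedDeriv 2 F₀ 1 = M * (M + 1) * K ^ 3 + 2 * A ^ 2 * (K * M - 1) ∧
    (1 ≤ K * M → iteratedDeriv 2 F₀ 1 ≠ 0) := by
  obtain ⟨m, rfl⟩ : ∃ m, M = m + 3 := ⟨M - 3, by omega⟩
  set M := m + 3 with hMdef
  set p1 : ℝ[X] := C K * ((C A * X - 1) ^ 2 * X ^ 2 - (X - 1) ^ 2)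
      + C (K * M + 1) * (X - 1) * (C A * X - 1) * (C A * X ^ 2 - 1) with hp1
  set p2 : ℝ[X] := X * (C A * X - 1) ^ 3 - C (A ^ 2) * (X - 1) ^ 2
      + C ((M : ℝ)) * (C A * X - 1) * C (A ^ 2) * (X - 1) ^ 2 with hp2
  set f0 : ℝ[X] := X ^ M * p2 - p1 with hf0
  have e1 : P₁ = fun φ => p1.eval φ := by funext φ; simp [hP₁, hp1]
  have e2 : P₂ = fun φ => p2.eval φ := by funext φ; simp [hP₂, hp2]
  have e0 : F₀ = fun φ => f0.eval φ := by funext φ; simp [hF₀, hf0, e1, e2]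
  have v1 : P₁ 1 = K ^ 3 := by simp [e1, hp1, hA]; ring
  have v2 : P₂ 1 = K ^ 3 := by simp [e2, hp2, hA]
  have d1 : deriv P₁ 1 = M * K ^ 3 + K ^ 2 * (3 + 4 * K) := by
    rw [e1, Polynomial.deriv]
    simp [hp1, derivative_mul, derivative_pow, hA]
    push_cast
    ring
  have d2 : deriv P₂ 1 = K ^ 2 * (3 + 4 * K) := by
    rw [e2, Polynomial.deriv]
    simp [hp2, derivative_mul, derivative_pow, hA]
    ring
  have v0 : F₀ 1 = 0 := by
    rw [hF₀]; simp [v1, v2]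
  have d0 : deriv F₀ 1 = 0 := by
    rw [e0, Polynomial.deriv]
    simp [hf0, hp1, hp2, derivative_mul, derivative_pow, hA]
    push_cast
    ring
  have dd0 : iteratedDeriv 2 F₀ 1
      = M * (M + 1) * K ^ 3 + 2 * A ^ 2 * (K * M - 1) := by
    rw [e0]
    have : iteratedDeriv 2 (fun φ => f0.eval φ) 1
        = (derivative (derivative f0)).eval 1 := by
      rw [iteratedDeriv_succ, iteratedDeriv_one]
      have h1 : deriv (fun φ => f0.eval φ) = fun φ => (derivative f0).eval φ := by
        funext x; exact Polynomial.deriv f0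
      rw [h1, Polynomial.deriv]
    rw [this]
    simp [hf0, hp1, hp2, derivative_mul, derivative_pow, hA, hMdef]
    ring
  refine ⟨v1, v2, d1, d2, v0, d0, dd0, fun hKM => ?_⟩
  rw [dd0]
  have h1 : (0:ℝ) < (M:ℝ) := by positivity
  have h2 : (0:ℝ) ≤ K * M - 1 := by linarith
  have h3 : (0:ℝ) < (M:ℝ) * (M + 1) * K ^ 3 := by positivity
  nlinarith [sq_nonneg A]
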